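/- Each run-length factor of a string is covered by at most 2 s-factors: if an s-factor of the Lempel-Ziv (s-)factorization of a string S begins at position j > 1 within a maximal run a^p of equal characters in S, then that s-factor extends at least to the end of the run. -/

import Mathlib

/-- `IsSFact S fs` : `fs` is the s-factorization (LZ factorization) of `S`.
Positions are 0-indexed: factor `i` starts at index `l = |f_1 ... f_{i-1}|`.
If the character `S[l]` does not occur earlier, the factor is that single character;
otherwise it is the longest prefix of `S.drop l` occurring at some earlier
starting index `p < l` (self-overlap allowed). -/
def IsSFact {α : Type*} (S : List α) (fs : List (List α)) : Prop :=
  fs.flatten = S ∧ (∀ f ∈ fs, f ≠ []) ∧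
  ∀ i (h : i < fs.length),
    ((¬ ∃ j < ((fs.take i).flatten).length, S[j]? = S[((fs.take i).flatten).length]?) →
        fs.get ⟨i, h⟩ = (S.drop ((fs.take i).flatten).length).take 1) ∧
    ((∃ j < ((fs.take i).flatten).length, S[j]? = S[((fs.take i).flatten).length]?) →
        (fs.get ⟨i, h⟩ <+: S.drop ((fs.take i).flatten).length ∧
         (∃ p < ((fs.take i).flatten).length, fs.get ⟨i, h⟩ <+: S.drop p) ∧
         ∀ g, g <+: S.drop ((fs.take i).flatten).length →
           (∃ p < ((fs.take i).flatten).length, g <+: S.drop p) →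
           g.length ≤ (fs.get ⟨i, h⟩).length))

/-- If an s-factor begins strictly inside a maximal run `a^p` (i.e. at the `j`-th
character of the run with `j > 1`), then it extends at least to the end of the run. -/
theorem stmt0 {α : Type*} (S : List α) (fs : List (List α)) (hfs : IsSFact S fs)
    (a : α) (p : ℕ) (A B : List α) (hp : 1 ≤ p)
    (hS : S = A ++ List.replicate p a ++ B)
    (hA : ∀ x, A.getLast? = some x → x ≠ a)
    (hB : ∀ x, B.head? = some x → x ≠ a)
    (i : ℕ) (hi : i < fs.length)
    (hstart : A.length < ((fs.take i).flatten).length)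
    (hstart2 : ((fs.take i).flatten).length < A.length + p) :
    A.length + p ≤ ((fs.take i).flatten).length + (fs.get ⟨i, hi⟩).length := by
  set l := ((fs.take i).flatten).length with hl
  obtain ⟨t, ht⟩ : ∃ t, l = A.length + t := ⟨l - A.length, by omega⟩
  have ht0 : 0 < t := by omega
  have htp : t < p := by omega
  have hdrop : ∀ s, s ≤ p → S.drop (A.length + s) = List.replicate (p - s) a ++ B := by
    intro s hs
    rw [hS, List.append_assoc, List.drop_append, List.drop_append_of_le_length
      (by simpa using hs), List.drop_replicate]
    simp
  have hget : ∀ s, s < p → S[A.length + s]? = some a := by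
    intro s hs
    have := List.getElem?_drop (xs := S) (i := A.length + s) (j := 0)
    rw [hdrop s (le_of_lt hs)] at this
    have h0 : (List.replicate (p - s) a ++ B)[0]? = some a := by
      rw [List.getElem?_append_left (by simp; omega)]
      simp [List.getElem?_replicate]; omega
    simpa [h0] using this.symm
  have hex : ∃ j < l, S[j]? = S[l]? := by
    refine ⟨A.length + (t - 1), by omega, ?_⟩
    rw [hget (t-1) (by omega), ht, hget t htp]
  obtain ⟨_, _, hmax⟩ := (hfs.2.2 i hi).2 hex
  have hg : (List.replicate (p - t) a).length ≤ (fs.get ⟨i, hi⟩).length := by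
    apply hmax
    · rw [← hl, ht, hdrop t (le_of_lt htp)]; exact List.prefix_append _ _
    · refine ⟨A.length + (t - 1), by rw [← hl]; omega, ?_⟩
      rw [hdrop (t-1) (by omega)]
      have : p - (t - 1) = (p - t) + 1 := by omega
      rw [this, List.replicate_add, List.append_assoc]
      exact List.prefix_append _ _
  simp only [List.length_replicate] at hg
  omega
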